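/- arXiv:2211.10203 — 2 statements merged into one kernel-verified Lean document; each statement's English description precedes it below -/
import Mathlib

section
/- Let p ≥ M ≥ 1, let U be a real p×M matrix with orthonormal columns (UᵀU = I_M), let Λ be an M×M diagonal matrix with nonnegative diagonal entries, let c > 0 and a ≥ 0, and let Σ̄ be a p×p real symmetric positive semidefinite matrix. With P = c·I_p + a·U Λ Uᵀ, one has |tr(P^{−1/2}·(c·Σ̄ + a·U Λ Uᵀ)·P^{−1/2}) − tr(Σ̄)| ≤ 2·M·‖Σ̄‖ + M. -/
open Matrix
open scoped Matrix.Norms.L2Operator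

/-- The positive semidefinite square root of a real matrix (zero junk value when the matrix
is not positive semidefinite). -/
noncomputable def matSqrt {n : Type*} [Fintype n] [DecidableEq n]
    (A : Matrix n n ℝ) : Matrix n n ℝ :=
  letI := Classical.propDecidable
  if h : A.PosSemidef then
    (h.1.eigenvectorUnitary : Matrix n n ℝ) *
      diagonal ((RCLike.ofReal : ℝ → ℝ) ∘ Real.sqrt ∘ h.1.eigenvalues) *
      (star h.1.eigenvectorUnitary : Matrix n n ℝ)
  else 0

/-- `A^{−1/2}`: the inverse of the positive semidefinite square root. -/
noncomputable def matInvSqrt {n : Type*} [Fintype n] [DecidableEq n]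
    (A : Matrix n n ℝ) : Matrix n n ℝ :=
  (matSqrt A)⁻¹

lemma aux_trace_mul_diagonal {m : Type*} [Fintype m] [DecidableEq m]
    (A : Matrix m m ℝ) (w : m → ℝ) :
    (A * diagonal w).trace = ∑ i, A i i * w i := by
  simp [Matrix.trace, Matrix.diag, Matrix.mul_apply, Matrix.diagonal]

lemma aux_quad_bound (p : ℕ) (S : Matrix (Fin p) (Fin p) ℝ) (x : Fin p → ℝ)
    (hx : ∑ j, x j * x j = 1) : |x ⬝ᵥ (S *ᵥ x)| ≤ ‖S‖ := by
  set y : EuclideanSpace ℝ (Fin p) := (EuclideanSpace.equiv (Fin p) ℝ).symm x with hy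
  have hxn : ‖y‖ = 1 := by
    rw [EuclideanSpace.norm_eq]
    simp only [Real.norm_eq_abs, sq_abs]
    rw [show ∑ j, y j ^ 2 = 1 by simpa [hy, EuclideanSpace.equiv, pow_two] using hx]
    exact Real.sqrt_one
  have hinner : (inner ℝ y ((EuclideanSpace.equiv (Fin p) ℝ).symm (S *ᵥ x)) : ℝ)
      = x ⬝ᵥ (S *ᵥ x) := by
    simp [PiLp.inner_apply, dotProduct, hy, EuclideanSpace.equiv, mul_comm]
  calc |x ⬝ᵥ (S *ᵥ x)| ≤ ‖y‖ * ‖(EuclideanSpace.equiv (Fin p) ℝ).symm (S *ᵥ x)‖ := by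
        rw [← hinner]; exact abs_real_inner_le_norm _ _
    _ ≤ ‖y‖ * (‖S‖ * ‖y‖) := by
        apply mul_le_mul_of_nonneg_left _ (norm_nonneg _)
        simpa [hy] using S.l2_opNorm_mulVec y
    _ = ‖S‖ := by rw [hxn]; ring

/-- For `U` a `p×M` matrix with orthonormal columns, `Λ = diagonal d` with
`d ≥ 0`, `c > 0`, `a ≥ 0`, `Σ̄` symmetric positive semidefinite and
`P = c·I_p + a·U Λ Uᵀ`, one has
`|tr(P^{−1/2}·(c·Σ̄ + a·U Λ Uᵀ)·P^{−1/2}) − tr(Σ̄)| ≤ 2·M·‖Σ̄‖ + M`. -/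
theorem trace_invsqrt_sandwich_close_to_trace
    (p M : ℕ) (hM : 1 ≤ M) (hMp : M ≤ p)
    (U : Matrix (Fin p) (Fin M) ℝ) (hU : Uᵀ * U = 1)
    (d : Fin M → ℝ) (hd : ∀ i, 0 ≤ d i) (c a : ℝ) (hc : 0 < c) (ha : 0 ≤ a)
    (Sbar : Matrix (Fin p) (Fin p) ℝ) (hSbar : Sbar.PosSemidef)
    (P : Matrix (Fin p) (Fin p) ℝ)
    (hP : P = c • (1 : Matrix (Fin p) (Fin p) ℝ) + a • (U * diagonal d * Uᵀ)) :
    |(matInvSqrt P * (c • Sbar + a • (U * diagonal d * Uᵀ)) * matInvSqrt P).trace -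
        Sbar.trace| ≤ 2 * (M : ℝ) * ‖Sbar‖ + (M : ℝ) := by
  set D : Matrix (Fin M) (Fin M) ℝ := diagonal d with hD
  have hcad : ∀ i, 0 < c + a * d i := fun i =>
    add_pos_of_pos_of_nonneg hc (mul_nonneg ha (hd i))
  set w : Fin M → ℝ := fun i => (c + a * d i)⁻¹ - c⁻¹ with hw
  set W : Matrix (Fin M) (Fin M) ℝ := diagonal w with hWdef
  set g : Fin M → ℝ := fun i => a * d i * (c + a * d i)⁻¹ with hg
  set B : Matrix (Fin M) (Fin M) ℝ := Uᵀ * Sbar * U with hB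
  set Pinv : Matrix (Fin p) (Fin p) ℝ := c⁻¹ • 1 + U * W * Uᵀ with hPinvdef
  -- positive semidefiniteness of P
  have hDpsd : D.PosSemidef := posSemidef_diagonal_iff.mpr fun i => hd i
  have hN : (U * D * Uᵀ).PosSemidef := by
    have := hDpsd.mul_mul_conjTranspose_same U
    simpa [conjTranspose_eq_transpose_of_trivial] using this
  have haN : (a • (U * D * Uᵀ)).PosSemidef := by
    exact hN.smul ha
  have hc1 : ((c • (1 : Matrix (Fin p) (Fin p) ℝ))).PosSemidef := by
    exact PosSemidef.one.smul hc.le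
  have hPsd : P.PosSemidef := by rw [hP]; exact hc1.add haN
  -- collapse lemma
  have collapse : ∀ (A₁ A₂ : Matrix (Fin M) (Fin M) ℝ),
      (U * A₁ * Uᵀ) * (U * A₂ * Uᵀ) = U * (A₁ * A₂) * Uᵀ := by
    intro A₁ A₂
    simp only [Matrix.mul_assoc]
    rw [← Matrix.mul_assoc Uᵀ U, hU, Matrix.one_mul]
  -- P * Pinv = 1
  have hZ : c • W + (c⁻¹ * a) • D + a • (D * W) = 0 := by
    ext i j
    by_cases hij : i = j
    · subst hij
      have h1 : c + a * d i ≠ 0 := (hcad i).ne'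
      simp only [hWdef, hD, Matrix.diagonal_mul_diagonal, Matrix.add_apply,
        Matrix.smul_apply, Matrix.diagonal_apply_eq, Matrix.zero_apply, smul_eq_mul, hw]
      field_simp
      ring
    · simp [hWdef, hD, Matrix.diagonal_mul_diagonal, Matrix.diagonal_apply_ne _ hij]
  have hkey : P * Pinv = 1 := by
    rw [hP, hPinvdef]
    rw [Matrix.add_mul, Matrix.mul_add, Matrix.mul_add]
    simp only [Matrix.smul_mul, Matrix.mul_smul, Matrix.one_mul, Matrix.mul_one,
      smul_smul, collapse]
    have h2 : c • (U * W * Uᵀ) + ((c⁻¹ * a) • (U * D * Uᵀ) + a • (U * (D * W) * Uᵀ)) =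
        U * (c • W + (c⁻¹ * a) • D + a • (D * W)) * Uᵀ := by
      simp only [Matrix.mul_add, Matrix.add_mul, Matrix.mul_smul, Matrix.smul_mul]
      abel
    rw [inv_mul_cancel₀ hc.ne', one_smul, add_assoc, h2, hZ]
    simp
  have hPinv : P⁻¹ = Pinv := inv_eq_right_inv hkey
  -- Q * Q = P⁻¹
  have hs2 : matSqrt P * matSqrt P = P := by
    simp only [matSqrt]
    rw [dif_pos hPsd]
    letI := Classical.propDecidable
    set E := (hPsd.1.eigenvectorUnitary : Matrix (Fin p) (Fin p) ℝ) with hE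
    have hEE : star E * E = 1 := Unitary.coe_star_mul_self _
    set s := diagonal ((RCLike.ofReal : ℝ → ℝ) ∘ Real.sqrt ∘ hPsd.1.eigenvalues) with hs
    have hss : s * s = diagonal ((RCLike.ofReal : ℝ → ℝ) ∘ hPsd.1.eigenvalues) := by
      rw [hs, diagonal_mul_diagonal]
      congr 1
      funext i
      simp [Real.mul_self_sqrt (hPsd.eigenvalues_nonneg i)]
    calc E * s * star E * (E * s * star E) = E * s * (star E * E) * s * star E := by
          simp only [Matrix.mul_assoc]
      _ = E * diagonal ((RCLike.ofReal : ℝ → ℝ) ∘ hPsd.1.eigenvalues) * star E := by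
          rw [hEE, Matrix.mul_one, Matrix.mul_assoc E s s, hss]
      _ = P := by
          conv_rhs => rw [hPsd.1.spectral_theorem, Unitary.conjStarAlgAut_apply]
  have hQ2 : matInvSqrt P * matInvSqrt P = P⁻¹ := by
    rw [matInvSqrt, ← Matrix.mul_inv_rev, hs2]
  -- reduce main trace
  set X : Matrix (Fin p) (Fin p) ℝ := c • Sbar + a • (U * D * Uᵀ) with hX
  have hred : (matInvSqrt P * X * matInvSqrt P).trace = (P⁻¹ * X).trace := by
    rw [trace_mul_cycle, hQ2]
  -- trace computations
  have tA : (U * D * Uᵀ).trace = ∑ i, d i := by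
    rw [trace_mul_cycle U D Uᵀ, hU, Matrix.one_mul, hD, trace_diagonal]
  have tB : ((U * W * Uᵀ) * Sbar).trace = ∑ i, B i i * w i := by
    rw [trace_mul_cycle (U * W) Uᵀ Sbar, trace_mul_cycle Sbar (U * W) Uᵀ]
    rw [show Uᵀ * Sbar * (U * W) = (Uᵀ * Sbar * U) * W by
      simp only [Matrix.mul_assoc]]
    rw [← hB, hWdef, aux_trace_mul_diagonal]
  have tC : (U * (W * D) * Uᵀ).trace = ∑ i, w i * d i := by
    rw [trace_mul_cycle U (W * D) Uᵀ, hU, Matrix.one_mul, hWdef, hD,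
      Matrix.diagonal_mul_diagonal, trace_diagonal]
  have hT5 : (P⁻¹ * X).trace = (c⁻¹ * c) * Sbar.trace + (c⁻¹ * a) * (∑ i, d i)
      + c * (∑ i, B i i * w i) + a * (∑ i, w i * d i) := by
    rw [hPinv, hPinvdef, hX]
    rw [Matrix.add_mul, Matrix.mul_add, Matrix.mul_add]
    simp only [Matrix.smul_mul, Matrix.mul_smul, Matrix.one_mul, smul_smul, collapse]
    rw [Matrix.trace_add, Matrix.trace_add, Matrix.trace_add, Matrix.trace_smul,
      Matrix.trace_smul, Matrix.trace_smul, Matrix.trace_smul, tA, tB, tC]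
    simp only [smul_eq_mul]
    ring
  -- the key difference formula
  have hdiff : (P⁻¹ * X).trace - Sbar.trace = ∑ i, (g i - B i i * g i) := by
    rw [hT5, inv_mul_cancel₀ hc.ne', one_mul]
    have hper : ∀ i, (c⁻¹ * a) * d i + (c * (B i i * w i) + a * (w i * d i))
        = g i - B i i * g i := by
      intro i
      have h1 : c + a * d i ≠ 0 := (hcad i).ne'
      simp only [hw, hg]
      field_simp
      ring
    calc Sbar.trace + (c⁻¹ * a) * (∑ i, d i) + c * (∑ i, B i i * w i)
          + a * (∑ i, w i * d i) - Sbar.trace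
        = ∑ i, ((c⁻¹ * a) * d i + (c * (B i i * w i) + a * (w i * d i))) := by
          rw [Finset.sum_add_distrib, Finset.sum_add_distrib, ← Finset.mul_sum,
            ← Finset.mul_sum, ← Finset.mul_sum]
          ring
      _ = ∑ i, (g i - B i i * g i) := Finset.sum_congr rfl fun i _ => hper i
  -- bounds on B i i and g i
  have hBbound : ∀ i, |B i i| ≤ ‖Sbar‖ := by
    intro i
    set x : Fin p → ℝ := fun j => U j i with hx
    have hx1 : ∑ j, x j * x j = 1 := by
      have := congrFun (congrFun hU i) i
      simpa [Matrix.mul_apply, Matrix.one_apply, hx] using this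
    have hBx : B i i = x ⬝ᵥ (Sbar *ᵥ x) := by
      simp only [hB, Matrix.mul_apply, Matrix.transpose_apply, Matrix.mulVec, dotProduct,
        hx, Finset.sum_mul, Finset.mul_sum]
      rw [Finset.sum_comm]
      exact Finset.sum_congr rfl fun j _ => Finset.sum_congr rfl fun k _ => by ring
    rw [hBx]
    exact aux_quad_bound p Sbar x hx1
  have hg0 : ∀ i, 0 ≤ g i := fun i =>
    mul_nonneg (mul_nonneg ha (hd i)) (inv_nonneg.mpr (hcad i).le)
  have hg1 : ∀ i, g i ≤ 1 := by
    intro i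
    rw [hg]
    rw [mul_inv_le_iff₀ (hcad i), one_mul]
    linarith [hc.le]
  -- final estimate
  rw [hred, hdiff]
  have hterm : ∀ i, |g i - B i i * g i| ≤ 1 + ‖Sbar‖ := by
    intro i
    rw [show g i - B i i * g i = g i * (1 - B i i) by ring, abs_mul]
    have h1 : |g i| ≤ 1 := by rw [abs_of_nonneg (hg0 i)]; exact hg1 i
    have h2 : |1 - B i i| ≤ 1 + ‖Sbar‖ := by
      calc |1 - B i i| ≤ |(1 : ℝ)| + |B i i| := abs_sub _ _
        _ ≤ 1 + ‖Sbar‖ := by rw [abs_one]; linarith [hBbound i]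
    calc |g i| * |1 - B i i| ≤ 1 * (1 + ‖Sbar‖) :=
          mul_le_mul h1 h2 (abs_nonneg _) zero_le_one
      _ = 1 + ‖Sbar‖ := one_mul _
  calc |∑ i, (g i - B i i * g i)| ≤ ∑ i, |g i - B i i * g i| :=
        Finset.abs_sum_le_sum_abs _ _
    _ ≤ ∑ _i : Fin M, (1 + ‖Sbar‖) := Finset.sum_le_sum fun i _ => hterm i
    _ = (M : ℝ) * (1 + ‖Sbar‖) := by
        rw [Finset.sum_const, Finset.card_univ, Fintype.card_fin, nsmul_eq_mul]
    _ ≤ 2 * (M : ℝ) * ‖Sbar‖ + (M : ℝ) := by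
        have hn : (0 : ℝ) ≤ ‖Sbar‖ := norm_nonneg _
        have hm : (0 : ℝ) ≤ (M : ℝ) := Nat.cast_nonneg _
        nlinarith
end

section
/- Let A and B be p×p Hermitian complex matrices, let z ∈ ℂ with Im(z) = v > 0, and let G be a p×p complex matrix with ‖G‖ ≤ c. Then |tr((A − z·I)^{−1}·G) − tr((B − z·I)^{−1}·G)| ≤ (c/v²)·tr((((A − B)*)·(A − B))^{1/2}), where the right-hand trace equals the sum of the singular values of A − B. -/
open Matrix
open scoped Matrix.Norms.L2Operator ComplexOrder

/-- The square root of a positive semidefinite matrix, as `Matrix.PosSemidef.sqrt` was defined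
in the older Mathlib (since removed in favour of `CFC.sqrt`). -/
noncomputable def Matrix.PosSemidef.sqrt {n : Type*} [Fintype n] [DecidableEq n] {𝕜 : Type*}
    [RCLike 𝕜] {A : Matrix n n 𝕜} (hA : A.PosSemidef) : Matrix n n 𝕜 :=
  hA.1.eigenvectorUnitary.1 * diagonal ((↑) ∘ (√·) ∘ hA.1.eigenvalues) *
    (star hA.1.eigenvectorUnitary : Matrix n n 𝕜)

section Aux

variable {p : ℕ}

lemma aux_diag_norm_le (d : Fin p → ℂ) {C : ℝ} (hC : 0 ≤ C)
    (h : ∀ i, ‖d i‖ ≤ C) : ‖Matrix.diagonal d‖ ≤ C := by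
  rw [Matrix.l2_opNorm_def]
  refine ContinuousLinearMap.opNorm_le_bound _ hC fun x => ?_
  have hx : ∀ y : EuclideanSpace ℂ (Fin p), ‖y‖ = Real.sqrt (∑ i, ‖y i‖ ^ 2) := fun y =>
    by simpa using EuclideanSpace.norm_eq y
  rw [hx, hx x, ← Real.sqrt_sq hC, ← Real.sqrt_mul (by positivity)]
  apply Real.sqrt_le_sqrt
  rw [Finset.mul_sum]
  refine Finset.sum_le_sum fun i _ => ?_
  have he : ((LinearEquiv.trans Matrix.toEuclideanLin
      LinearMap.toContinuousLinearMap) (Matrix.diagonal d) x) i = d i * x i := by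
    show (Matrix.diagonal d *ᵥ _) i = _
    simp [Matrix.mulVec_diagonal]
  rw [he, norm_mul, mul_pow]
  exact mul_le_mul_of_nonneg_right
    (pow_le_pow_left₀ (norm_nonneg _) (h i) 2) (by positivity)

lemma aux_entry_le_norm (M : Matrix (Fin p) (Fin p) ℂ) (i j : Fin p) :
    ‖M i j‖ ≤ ‖M‖ := by
  have hx := M.l2_opNorm_mulVec (EuclideanSpace.single j (1 : ℂ))
  rw [EuclideanSpace.norm_single, norm_one, mul_one] at hx
  refine le_trans ?_ hx
  set y : EuclideanSpace ℂ (Fin p) :=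
    (EuclideanSpace.equiv (Fin p) ℂ).symm (M *ᵥ (EuclideanSpace.single j (1 : ℂ)))
  have hy : y i = M i j := by
    show (M *ᵥ _) i = _
    simp only [Matrix.mulVec, dotProduct, EuclideanSpace.single_apply, mul_ite,
      mul_one, mul_zero]
    simp
  have hnorm : ‖y‖ = Real.sqrt (∑ k, ‖y k‖ ^ 2) := by simpa using EuclideanSpace.norm_eq y
  rw [← hy]
  calc ‖y i‖ = Real.sqrt (‖y i‖ ^ 2) := (Real.sqrt_sq (norm_nonneg _)).symm
    _ ≤ Real.sqrt (∑ k, ‖y k‖ ^ 2) := by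
        apply Real.sqrt_le_sqrt
        exact Finset.single_le_sum (f := fun k => ‖y k‖ ^ 2)
          (fun k _ => by positivity) (Finset.mem_univ i)
    _ = ‖y‖ := hnorm.symm

lemma aux_resolvent (A : Matrix (Fin p) (Fin p) ℂ) (hA : A.IsHermitian)
    (z : ℂ) (hz : z.im ≠ 0) :
    (A - z • 1) * (A - z • 1)⁻¹ = 1 ∧ (A - z • 1)⁻¹ * (A - z • 1) = 1 ∧
      ‖(A - z • 1)⁻¹‖ ≤ 1 / |z.im| := by
  classical
  set U : Matrix (Fin p) (Fin p) ℂ := (hA.eigenvectorUnitary : Matrix (Fin p) (Fin p) ℂ) with hU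
  have hUU : U * star U = 1 := Matrix.mem_unitaryGroup_iff.mp hA.eigenvectorUnitary.2
  have hUU' : star U * U = 1 := Matrix.mem_unitaryGroup_iff'.mp hA.eigenvectorUnitary.2
  set d : Fin p → ℂ := fun i => (hA.eigenvalues i : ℂ) - z with hdd
  have hd : ∀ i, d i ≠ 0 := by
    intro i h
    have him : (d i).im = -z.im := by simp [hdd]
    rw [h] at him
    simp only [Complex.zero_im] at him
    exact hz (by linarith)
  have hAz : A - z • 1 = U * Matrix.diagonal d * star U := by
    have h2 : U * (z • (1 : Matrix (Fin p) (Fin p) ℂ)) * star U = z • 1 := by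
      rw [Matrix.mul_smul, mul_one, Matrix.smul_mul, hUU]
    have h3 : Matrix.diagonal d =
        Matrix.diagonal (RCLike.ofReal ∘ hA.eigenvalues) - z • 1 := by
      rw [Matrix.smul_one_eq_diagonal, Matrix.diagonal_sub]
      rfl
    have hspec : A = U * Matrix.diagonal (RCLike.ofReal ∘ hA.eigenvalues) * star U :=
      hA.spectral_theorem
    rw [h3, Matrix.mul_sub, Matrix.sub_mul, h2, ← hspec]
  set R : Matrix (Fin p) (Fin p) ℂ := U * Matrix.diagonal (fun i => (d i)⁻¹) * star U with hR
  have hmul : (A - z • 1) * R = 1 := by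
    rw [hAz, hR]
    calc U * Matrix.diagonal d * star U * (U * Matrix.diagonal (fun i => (d i)⁻¹) * star U)
        = U * Matrix.diagonal d * (star U * U) * Matrix.diagonal (fun i => (d i)⁻¹) * star U := by
          noncomm_ring
      _ = U * (Matrix.diagonal d * Matrix.diagonal (fun i => (d i)⁻¹)) * star U := by
          rw [hUU']; noncomm_ring
      _ = 1 := by
          rw [Matrix.diagonal_mul_diagonal]
          have : (fun i => d i * (d i)⁻¹) = fun _ : Fin p => (1 : ℂ) := by
            funext i; exact mul_inv_cancel₀ (hd i)
          rw [this, Matrix.diagonal_one, mul_one, hUU]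
  have hinv : (A - z • 1)⁻¹ = R := Matrix.inv_eq_right_inv hmul
  refine ⟨by rw [hinv]; exact hmul, ?_, ?_⟩
  · rw [hinv]
    exact mul_eq_one_comm.mp hmul
  · rw [hinv, hR]
    have h1 : ‖U * Matrix.diagonal (fun i => (d i)⁻¹) * star U‖
        = ‖Matrix.diagonal (fun i => (d i)⁻¹)‖ := by
      rw [mul_assoc, CStarRing.norm_mem_unitary_mul _ hA.eigenvectorUnitary.2,
        CStarRing.norm_mul_mem_unitary _ (Unitary.star_mem hA.eigenvectorUnitary.2)]
    rw [h1]
    refine aux_diag_norm_le _ (by positivity) fun i => ?_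
    rw [norm_inv, one_div]
    have him : |(d i).im| = |z.im| := by simp [hdd]
    have h2 : |z.im| ≤ ‖d i‖ := him ▸ Complex.abs_im_le_norm (d i)
    exact inv_anti₀ (abs_pos.mpr hz) h2

lemma aux_trace_abs_le (D X : Matrix (Fin p) (Fin p) ℂ) (hD : D.IsHermitian) :
    ‖(X * D).trace‖ ≤ ‖X‖ * ∑ i, |hD.eigenvalues i| := by
  classical
  set U : Matrix (Fin p) (Fin p) ℂ := (hD.eigenvectorUnitary : Matrix (Fin p) (Fin p) ℂ)
  set Y : Matrix (Fin p) (Fin p) ℂ := star U * X * U with hY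
  have htr : (X * D).trace
      = (Y * Matrix.diagonal (RCLike.ofReal ∘ hD.eigenvalues)).trace := by
    nth_rewrite 1 [show D = U * Matrix.diagonal (RCLike.ofReal ∘ hD.eigenvalues) * star U from
      hD.spectral_theorem]
    rw [show X * (U * Matrix.diagonal (RCLike.ofReal ∘ hD.eigenvalues) * star U)
        = (X * U) * Matrix.diagonal (RCLike.ofReal ∘ hD.eigenvalues) * star U by noncomm_ring,
      Matrix.trace_mul_cycle, hY]
    congr 1
    noncomm_ring
  have hYn : ‖Y‖ = ‖X‖ := by
    rw [hY, mul_assoc, CStarRing.norm_mem_unitary_mul _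
      (Unitary.star_mem hD.eigenvectorUnitary.2),
      CStarRing.norm_mul_mem_unitary _ hD.eigenvectorUnitary.2]
  rw [htr]
  have hdiag : (Y * Matrix.diagonal (RCLike.ofReal ∘ hD.eigenvalues)).trace
      = ∑ i, Y i i * (hD.eigenvalues i : ℂ) := by
    simp [Matrix.trace, Matrix.mul_diagonal, Matrix.diag]
  rw [hdiag]
  calc ‖∑ i, Y i i * (hD.eigenvalues i : ℂ)‖
      ≤ ∑ i, ‖Y i i * (hD.eigenvalues i : ℂ)‖ := by
        exact norm_sum_le Finset.univ (fun i => Y i i * (hD.eigenvalues i : ℂ))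
    _ ≤ ∑ i, ‖X‖ * |hD.eigenvalues i| := by
        refine Finset.sum_le_sum fun i _ => ?_
        rw [norm_mul, Complex.norm_real, Real.norm_eq_abs]
        exact mul_le_mul_of_nonneg_right (hYn ▸ aux_entry_le_norm Y i i) (abs_nonneg _)
    _ = ‖X‖ * ∑ i, |hD.eigenvalues i| := by rw [Finset.mul_sum]

open scoped MatrixOrder in
lemma aux_sqrt_eq {M C : Matrix (Fin p) (Fin p) ℂ} (hM : M.PosSemidef) (hC : C.PosSemidef)
    (h : C ^ 2 = M) : C = hM.sqrt := by
  have e1 : hM.sqrt = cfc Real.sqrt M := by rw [hM.1.cfc_eq]; rfl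
  have e2 : CFC.sqrt M = cfc Real.sqrt M := by
    rw [CFC.sqrt_eq_real_sqrt M hM.nonneg, cfcₙ_eq_cfc]
  rw [e1, ← e2, CFC.sqrt_unique (by rw [← pow_two]; exact h) hC.nonneg]

lemma aux_trace_sqrt (D : Matrix (Fin p) (Fin p) ℂ) (hD : D.IsHermitian) :
    ((posSemidef_conjTranspose_mul_self D).sqrt.trace).re = ∑ i, |hD.eigenvalues i| := by
  classical
  set U : Matrix (Fin p) (Fin p) ℂ := (hD.eigenvectorUnitary : Matrix (Fin p) (Fin p) ℂ)
  have hUU : U * star U = 1 := Matrix.mem_unitaryGroup_iff.mp hD.eigenvectorUnitary.2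
  have hUU' : star U * U = 1 := Matrix.mem_unitaryGroup_iff'.mp hD.eigenvectorUnitary.2
  set C : Matrix (Fin p) (Fin p) ℂ :=
    U * Matrix.diagonal (fun i => (Complex.ofReal |hD.eigenvalues i|)) * star U with hC
  have hCpsd : C.PosSemidef := by
    have hdpsd : (Matrix.diagonal (fun i => (Complex.ofReal |hD.eigenvalues i|))).PosSemidef :=
      Matrix.posSemidef_diagonal_iff.mpr fun i => by
        rw [Complex.zero_le_real]; exact abs_nonneg _
    simpa [hC, Matrix.star_eq_conjTranspose] using hdpsd.mul_mul_conjTranspose_same U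
  have hsq : C ^ 2 = Dᴴ * D := by
    have hDD : Dᴴ * D
        = U * Matrix.diagonal (fun i => ((hD.eigenvalues i : ℂ) * (hD.eigenvalues i : ℂ)))
          * star U := by
      have hDspec : D = U * Matrix.diagonal (RCLike.ofReal ∘ hD.eigenvalues) * star U :=
        hD.spectral_theorem
      calc Dᴴ * D = D * D := by rw [hD.eq]
        _ = U * Matrix.diagonal (RCLike.ofReal ∘ hD.eigenvalues) * star U *
            (U * Matrix.diagonal (RCLike.ofReal ∘ hD.eigenvalues) * star U) := by
              rw [← hDspec]
        _ = U * (Matrix.diagonal (RCLike.ofReal ∘ hD.eigenvalues) * (star U * U) *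
              Matrix.diagonal (RCLike.ofReal ∘ hD.eigenvalues)) * star U := by noncomm_ring
        _ = _ := by
            rw [hUU', mul_one, Matrix.diagonal_mul_diagonal]
            rfl
    rw [hDD, hC, pow_two]
    calc U * Matrix.diagonal (fun i => (Complex.ofReal |hD.eigenvalues i|)) * star U *
          (U * Matrix.diagonal (fun i => (Complex.ofReal |hD.eigenvalues i|)) * star U)
        = U * (Matrix.diagonal (fun i => (Complex.ofReal |hD.eigenvalues i|)) * (star U * U) *
            Matrix.diagonal (fun i => (Complex.ofReal |hD.eigenvalues i|))) * star U := by noncomm_ring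
      _ = _ := by
          rw [hUU', mul_one, Matrix.diagonal_mul_diagonal]
          have habs : (fun i => (Complex.ofReal |hD.eigenvalues i|) *
              (Complex.ofReal |hD.eigenvalues i|))
              = fun i => (hD.eigenvalues i : ℂ) * (hD.eigenvalues i : ℂ) := by
            funext i
            rw [← Complex.ofReal_mul, ← Complex.ofReal_mul, abs_mul_abs_self]
          rw [habs]
  have hCsqrt : C = (posSemidef_conjTranspose_mul_self D).sqrt :=
    aux_sqrt_eq (posSemidef_conjTranspose_mul_self D) hCpsd hsq
  rw [← hCsqrt, hC, Matrix.trace_mul_cycle, hUU', one_mul, Matrix.trace_diagonal]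
  rw [Complex.re_sum]
  simp

end Aux

/-- Resolvent perturbation bound for traces against a bounded matrix:
for Hermitian `A, B`, `z` with `Im z = v > 0`, and `‖G‖ ≤ c`,
`|tr((A − zI)⁻¹ G) − tr((B − zI)⁻¹ G)| ≤ (c/v²)·tr(((A − B)* (A − B))^{1/2})`,
the right-hand trace being the sum of the singular values of `A − B`. -/
theorem trace_resolvent_difference_bound
    (p : ℕ) (A B G : Matrix (Fin p) (Fin p) ℂ)
    (hA : A.IsHermitian) (hB : B.IsHermitian)
    (z : ℂ) (v : ℝ) (hv : 0 < v) (hzv : z.im = v)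
    (c : ℝ) (hG : ‖G‖ ≤ c) :
    ‖((A - z • 1)⁻¹ * G).trace - ((B - z • 1)⁻¹ * G).trace‖ ≤
      c / v ^ 2 * ((posSemidef_conjTranspose_mul_self (A - B)).sqrt.trace).re := by
  have hzi : z.im ≠ 0 := by rw [hzv]; exact hv.ne'
  obtain ⟨hA1, hA2, hA3⟩ := aux_resolvent A hA z hzi
  obtain ⟨hB1, hB2, hB3⟩ := aux_resolvent B hB z hzi
  set RA := (A - z • 1)⁻¹ with hRA
  set RB := (B - z • 1)⁻¹ with hRB
  have hc : (0 : ℝ) ≤ c := le_trans (norm_nonneg _) hG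
  have hid : RA - RB = -(RA * (A - B) * RB) := by
    have : RA - RB = RA * ((B - z • 1) - (A - z • 1)) * RB := by
      rw [Matrix.mul_sub, Matrix.sub_mul]
      rw [show RA * (B - z • 1) * RB = RA * ((B - z • 1) * RB) by noncomm_ring, hB1, mul_one,
        show RA * (A - z • 1) * RB = (RA * (A - z • 1)) * RB by noncomm_ring, hA2, one_mul]
    rw [this]
    have h2 : (B - z • 1) - (A - z • 1) = -(A - B) := by noncomm_ring
    rw [h2]
    noncomm_ring
  have hkey : (RA * G).trace - (RB * G).trace = -(((RB * G * RA) * (A - B)).trace) := by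
    rw [← Matrix.trace_sub, ← Matrix.sub_mul, hid]
    rw [show (-(RA * (A - B) * RB)) * G = -((RA * (A - B)) * (RB * G)) by noncomm_ring]
    rw [Matrix.trace_neg, neg_inj, Matrix.trace_mul_comm]
    congr 1
    noncomm_ring
  rw [hkey, norm_neg]
  set D := A - B with hD
  have hDh : D.IsHermitian := hA.sub hB
  calc ‖(RB * G * RA * D).trace‖
      ≤ ‖RB * G * RA‖ * ∑ i, |hDh.eigenvalues i| := aux_trace_abs_le D (RB * G * RA) hDh
    _ ≤ c / v ^ 2 * ∑ i, |hDh.eigenvalues i| := by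
        refine mul_le_mul_of_nonneg_right ?_
          (Finset.sum_nonneg fun i _ => abs_nonneg _)
        have h1 : ‖RB * G * RA‖ ≤ ‖RB‖ * ‖G‖ * ‖RA‖ :=
          le_trans (Matrix.l2_opNorm_mul _ _)
            (mul_le_mul_of_nonneg_right (Matrix.l2_opNorm_mul _ _) (norm_nonneg _))
        have hzv' : |z.im| = v := by rw [hzv, abs_of_pos hv]
        rw [hzv'] at hA3 hB3
        calc ‖RB * G * RA‖ ≤ ‖RB‖ * ‖G‖ * ‖RA‖ := h1
          _ ≤ (1 / v) * c * (1 / v) := by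
              have h0v : (0:ℝ) ≤ 1 / v := by positivity
              refine mul_le_mul (mul_le_mul hB3 hG (norm_nonneg _) h0v) hA3
                (norm_nonneg _) (by positivity)
          _ = c / v ^ 2 := by
              have hv0 : v ≠ 0 := hv.ne'
              rw [one_div, div_eq_mul_inv, pow_two, mul_inv]
              ring
    _ = c / v ^ 2 * ((posSemidef_conjTranspose_mul_self D).sqrt.trace).re := by
        rw [aux_trace_sqrt D hDh]
end
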